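/- Let (g, ∗) be a finite-dimensional left-symmetric algebra over a field of characteristic zero. If the associated product on g ⊕ g* makes it a Frobenius Lie algebra, then the left-symmetric algebra (g, ∗) has a right identity. More precisely: if g ⊕ g* with the standard symplectic form is Frobenius and its induced left-symmetric product has right identity e + v₀ with e ∈ g, v₀ ∈ g*, then e is a right identity of (g, ∗). -/
import Mathlib

/-- If the symplectic double `g ⊕ g*` of a left-symmetric algebra `(g,∗)` is a
Frobenius Lie algebra and its induced left-symmetric product has a right
identity `e + v₀` with `e ∈ g`, `v₀ ∈ g*`, then `e` is a right identity of
`(g,∗)`. -/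
theorem double_frobenius_right_identity {F : Type*} [Field F] [CharZero F]
    {g : Type*} [AddCommGroup g] [Module F g] [FiniteDimensional F g]
    (mul : g →ₗ[F] g →ₗ[F] g)
    (hls : ∀ x y z : g, mul (mul x y) z - mul x (mul y z)
        = mul (mul y x) z - mul y (mul x z))
    (br : (g × Module.Dual F g) → (g × Module.Dual F g) → (g × Module.Dual F g))
    (hbr : ∀ a b, br a b = (mul a.1 b.1 - mul b.1 a.1,
        - (b.2 ∘ₗ mul a.1) + (a.2 ∘ₗ mul b.1)))
    (ω : (g × Module.Dual F g) → (g × Module.Dual F g) → F)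
    (hω : ∀ a b, ω a b = b.2 a.1 - a.2 b.1)
    (star : (g × Module.Dual F g) → (g × Module.Dual F g) → (g × Module.Dual F g))
    (hstar : ∀ a b c, ω a (star b c) = ω (br a b) c)
    (hstar_add : ∀ a b c, star a (b + c) = star a b + star a c)
    (hsub : ∀ x y : g, (star (x, 0) (y, 0)).1 = mul x y)
    (hideal : ∀ (x : g) (v : Module.Dual F g), (star (x, 0) (0, v)).1 = 0)
    (hFrob : ∃ f : Module.Dual F (g × Module.Dual F g), ∀ a b, ω a b = f (br a b))
    (e : g) (v₀ : Module.Dual F g)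
    (hrid : ∀ a, star a (e, v₀) = a) :
    ∀ x : g, mul x e = x := by
  intro x
  have h := congrArg Prod.fst (hrid (x, 0))
  have hsplit : ((e, v₀) : g × Module.Dual F g) = (e, 0) + (0, v₀) := by
    simp [Prod.ext_iff]
  rw [hsplit, hstar_add] at h
  simpa [hsub, hideal] using h
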